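/- arXiv:2102.10712 — 3 statements merged into one kernel-verified Lean document; each statement's English description precedes it below -/
import Mathlib

section
/- Let Σ₀ and Σ₁ be symmetric positive definite d×d real matrices. If F₁ and F₂ are symmetric positive semidefinite d×d matrices satisfying F₁ Σ₀ F₁ = Σ₁ and F₂ Σ₀ F₂ = Σ₁, then F₁ = F₂. That is, the symmetric positive semidefinite solution F of the matrix equation F Σ₀ F = Σ₁ is unique. -/
open Matrix
open scoped MatrixOrder

/-- **Uniqueness of the symmetric positive semidefinite solution of `F Σ₀ F = Σ₁`.**
If `S₀`, `S₁` are symmetric positive definite and `F₁`, `F₂` are symmetric positive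
semidefinite with `F₁ S₀ F₁ = S₁` and `F₂ S₀ F₂ = S₁`, then `F₁ = F₂`. -/
theorem optimal_transport_matrix_unique
    {d : ℕ} (S₀ S₁ F₁ F₂ : Matrix (Fin d) (Fin d) ℝ)
    (hS₀ : S₀.PosDef) (hS₁ : S₁.PosDef)
    (hF₁ : F₁.PosSemidef) (hF₂ : F₂.PosSemidef)
    (h₁ : F₁ * S₀ * F₁ = S₁) (h₂ : F₂ * S₀ * F₂ = S₁) :
    F₁ = F₂ := by
  set R := CFC.sqrt S₀ with hR
  have hRh : Rᴴ = R := (nonneg_iff_posSemidef.mp (CFC.sqrt_nonneg S₀)).isHermitian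
  have hRR : R * R = S₀ := CFC.sqrt_mul_sqrt_self S₀ (nonneg_iff_posSemidef.mpr hS₀.posSemidef)
  have hdet : R.det ≠ 0 := by
    have : R.det * R.det = S₀.det := by rw [← det_mul, hRR]
    intro h
    exact hS₀.det_pos.ne' (by rw [← this, h, mul_zero])
  have key : ∀ F : Matrix (Fin d) (Fin d) ℝ, F * S₀ * F = S₁ →
      (R * F * R) ^ 2 = R * S₁ * R := by
    intro F hF
    rw [pow_two]
    calc R * F * R * (R * F * R) = R * (F * S₀ * F) * R := by
          rw [← hRR]; noncomm_ring
      _ = R * S₁ * R := by rw [hF]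
  have hP₁ : (R * F₁ * R).PosSemidef := by
    have := hF₁.conjTranspose_mul_mul_same R
    rwa [hRh] at this
  have hP₂ : (R * F₂ * R).PosSemidef := by
    have := hF₂.conjTranspose_mul_mul_same R
    rwa [hRh] at this
  have heq : R * F₁ * R = R * F₂ * R :=
    by
      have hsq : (R * F₁ * R) * (R * F₁ * R) = (R * F₂ * R) * (R * F₂ * R) := by
        simpa only [pow_two] using (key F₁ h₁).trans (key F₂ h₂).symm
      have := congrArg CFC.sqrt hsq
      rwa [CFC.sqrt_mul_self _ (nonneg_iff_posSemidef.mpr hP₁),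
        CFC.sqrt_mul_self _ (nonneg_iff_posSemidef.mpr hP₂)] at this
  have hRinv : IsUnit R := (isUnit_iff_isUnit_det R).mpr (isUnit_iff_ne_zero.mpr hdet)
  have h1 : F₁ * R = F₂ * R := hRinv.mul_left_cancel (by
    rw [← Matrix.mul_assoc, ← Matrix.mul_assoc, heq])
  exact hRinv.mul_right_cancel h1
end

section
/- Let γ_d denote the standard Gaussian measure on ℝ^d, let Σ₀, Σ₁ be symmetric positive definite d×d matrices and m₀, m₁ ∈ ℝ^d, and let μ₀ and μ₁ be the pushforwards of γ_d under x ↦ Σ₀^{1/2}x + m₀ and x ↦ Σ₁^{1/2}x + m₁ respectively. Let F be the unique symmetric positive definite solution of F Σ₀ F = Σ₁ and T(x) = F(x − m₀) + m₁. Then the deterministic coupling π_T = (id, T)_*μ₀ is a coupling of μ₀ and μ₁ (its first and second marginals are μ₀ and μ₁), and it is optimal for the quadratic cost: for every probability measure π on ℝ^d × ℝ^d whose first marginal is μ₀ and second marginal is μ₁, ∫ |x − y|² dπ(x, y) ≥ ∫ |x − T(x)|² dμ₀(x). -/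
open Matrix MeasureTheory ProbabilityTheory

open Set


variable {d : ℕ}

noncomputable def gpdf : ℝ → ℝ := gaussianPDFReal 0 1

lemma gpdf_int : Integrable gpdf := integrable_gaussianPDFReal 0 1
lemma gpdf_nonneg (x : ℝ) : 0 ≤ gpdf x := gaussianPDFReal_nonneg 0 1 x

lemma gamma_eq : (Measure.pi fun _ : Fin d => gaussianReal 0 1)
    = (volume : Measure (Fin d → ℝ)).withDensity
      (fun x => ENNReal.ofReal (∏ i, gpdf (x i))) := by
  refine Measure.pi_eq fun s hs => ?_
  rw [withDensity_apply _ (MeasurableSet.univ_pi hs),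
    ← lintegral_indicator (MeasurableSet.univ_pi hs)]
  have key : ∀ x : Fin d → ℝ, (univ.pi s).indicator (fun x => ENNReal.ofReal (∏ i, gpdf (x i))) x
      = ENNReal.ofReal (∏ i, (s i).indicator gpdf (x i)) := by
    intro x
    by_cases hx : x ∈ univ.pi s
    · rw [Set.indicator_of_mem hx]
      congr 1
      exact Finset.prod_congr rfl fun i _ =>
        (Set.indicator_of_mem (hx i (Set.mem_univ i)) _).symm
    · rw [Set.indicator_of_notMem hx]
      rw [Set.mem_pi] at hx
      push_neg at hx
      obtain ⟨i, -, hi⟩ := hx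
      rw [Finset.prod_eq_zero (Finset.mem_univ i) (Set.indicator_of_notMem hi _),
        ENNReal.ofReal_zero]
  simp_rw [key]
  have hint : ∀ i : Fin d, Integrable ((s i).indicator gpdf) :=
    fun i => gpdf_int.indicator (hs i)
  have hnn : 0 ≤ fun x : Fin d → ℝ => ∏ i, (s i).indicator gpdf (x i) := by
    intro x
    exact Finset.prod_nonneg fun i _ => Set.indicator_nonneg (fun y _ => gpdf_nonneg y) _
  rw [volume_pi, ← ofReal_integral_eq_lintegral_ofReal (Integrable.fintype_prod hint) (ae_of_all _ hnn),
    integral_fintype_prod_eq_prod (fun i => (s i).indicator gpdf),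
    ENNReal.ofReal_prod_of_nonneg (fun i _ => integral_nonneg
      (Set.indicator_nonneg (fun y _ => gpdf_nonneg y)))]
  refine Finset.prod_congr rfl fun i _ => ?_
  rw [integral_indicator (hs i), gaussianReal_apply_eq_integral 0 one_ne_zero (s i)]
  rfl

lemma gpdf_eq (x : ℝ) : gpdf x = (Real.sqrt (2*Real.pi))⁻¹ * Real.exp (-(x^2/2)) := by
  simp [gpdf, gaussianPDFReal]
  norm_num
  left
  ring

lemma gpdf_prod (v : Fin d → ℝ) :
    ∏ i, gpdf (v i) = (Real.sqrt (2*Real.pi))⁻¹ ^ d * Real.exp (-((∑ i, (v i)^2)/2)) := by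
  simp_rw [gpdf_eq, Finset.prod_mul_distrib, Finset.prod_const, ← Real.exp_sum]
  congr 2
  · simp
  · rw [Finset.sum_neg_distrib, neg_inj, Finset.sum_div]

lemma measurable_mulVec (M : Matrix (Fin d) (Fin d) ℝ) : Measurable (M.mulVec) := by
  have : (M.mulVec) = ⇑(Matrix.toLin' M) := by ext x i; rw [Matrix.toLin'_apply]
  rw [this]
  exact (LinearMap.continuous_on_pi _).measurable

lemma orth_norm {U : Matrix (Fin d) (Fin d) ℝ} (hU : Uᵀ * U = 1) (v : Fin d → ℝ) :
    ∑ i, (U.mulVec v i)^2 = ∑ i, (v i)^2 := by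
  have h1 : ∀ w : Fin d → ℝ, ∑ i, (w i)^2 = w ⬝ᵥ w := by
    intro w; simp [dotProduct, sq]
  rw [h1, h1]
  calc U.mulVec v ⬝ᵥ U.mulVec v = Matrix.vecMul v Uᵀ ⬝ᵥ U.mulVec v := by
        rw [Matrix.vecMul_transpose]
    _ = v ⬝ᵥ (Uᵀ * U).mulVec v := by
        rw [Matrix.dotProduct_mulVec, Matrix.vecMul_vecMul, Matrix.dotProduct_mulVec]
    _ = v ⬝ᵥ v := by rw [hU, Matrix.one_mulVec]

lemma orth_volume {U : Matrix (Fin d) (Fin d) ℝ} (hU : Uᵀ * U = 1) :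
    (volume : Measure (Fin d → ℝ)).map (U.mulVec) = volume := by
  have hdet : U.det * U.det = 1 := by
    have := congrArg Matrix.det hU
    rwa [Matrix.det_mul, Matrix.det_transpose, Matrix.det_one] at this
  have hdet' : U.det ≠ 0 := by
    intro h; rw [h, mul_zero] at hdet; exact zero_ne_one hdet
  have : (U.mulVec) = ⇑(Matrix.toLin' U) := by ext x i; rw [Matrix.toLin'_apply]
  rw [this, Real.map_matrix_volume_pi_eq_smul_volume_pi hdet']
  have : |U.det⁻¹| = 1 := by
    rcases mul_self_eq_one_iff.mp hdet with h | h <;> norm_num [h]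
  rw [this, ENNReal.ofReal_one, one_smul]

lemma measurable_gdens : Measurable (fun x : Fin d → ℝ => ENNReal.ofReal (∏ i, gpdf (x i))) := by
  refine Measurable.ennreal_ofReal ?_
  exact Finset.measurable_prod _ fun i _ =>
    (measurable_gaussianPDFReal 0 1).comp (measurable_pi_apply i)

lemma gamma_rot {U : Matrix (Fin d) (Fin d) ℝ} (hU : Uᵀ * U = 1) :
    (Measure.pi fun _ : Fin d => gaussianReal 0 1).map (U.mulVec)
      = Measure.pi fun _ : Fin d => gaussianReal 0 1 := by
  have hmeas := measurable_mulVec (d := d) U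
  rw [gamma_eq]
  set g : (Fin d → ℝ) → ENNReal := fun x => ENNReal.ofReal (∏ i, gpdf (x i)) with hgdef
  have hginv : ∀ x, g (U.mulVec x) = g x := by
    intro x
    simp only [hgdef, gpdf_prod, orth_norm hU]
  ext A hA
  rw [Measure.map_apply hmeas hA, withDensity_apply _ (hmeas hA), withDensity_apply _ hA,
    ← lintegral_indicator (hmeas hA), ← lintegral_indicator hA]
  have key : ∀ x, (U.mulVec ⁻¹' A).indicator g x = A.indicator g (U.mulVec x) := by
    intro x
    by_cases hx : U.mulVec x ∈ A
    · rw [Set.indicator_of_mem hx, Set.indicator_of_mem (Set.mem_preimage.mpr hx), hginv]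
    · rw [Set.indicator_of_notMem hx, Set.indicator_of_notMem (fun h => hx (Set.mem_preimage.mp h))]
  simp_rw [key]
  rw [← lintegral_map (measurable_gdens.indicator hA) hmeas, orth_volume hU]

lemma sq_gpdf_int : Integrable (fun x : ℝ => x^2 * gpdf x) := by
  have hbound : ∀ x : ℝ, ‖x^2 * gpdf x‖ ≤ ‖(4 * (Real.sqrt (2*Real.pi))⁻¹) * Real.exp (-(4⁻¹ : ℝ) * x^2)‖ := by
    intro x
    have h1 : 0 ≤ gpdf x := gpdf_nonneg x
    have hc : (0:ℝ) < (Real.sqrt (2*Real.pi))⁻¹ := by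
      rw [inv_pos]
      exact Real.sqrt_pos.mpr (by positivity)
    rw [Real.norm_eq_abs, Real.norm_eq_abs, abs_of_nonneg (by positivity),
      abs_of_nonneg (by positivity)]
    rw [gpdf_eq]
    have hx2 : x^2 ≤ 4 * Real.exp (x^2/4) := by
      have := Real.add_one_le_exp (x^2/4)
      nlinarith [sq_nonneg x, Real.exp_pos (x^2/4)]
    calc x^2 * ((Real.sqrt (2*Real.pi))⁻¹ * Real.exp (-(x^2/2)))
        ≤ (4 * Real.exp (x^2/4)) * ((Real.sqrt (2*Real.pi))⁻¹ * Real.exp (-(x^2/2))) := by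
          apply mul_le_mul_of_nonneg_right hx2 (by positivity)
      _ = 4 * (Real.sqrt (2*Real.pi))⁻¹ * (Real.exp (x^2/4) * Real.exp (-(x^2/2))) := by ring
      _ = 4 * (Real.sqrt (2*Real.pi))⁻¹ * Real.exp (-(4⁻¹:ℝ) * x^2) := by
          rw [← Real.exp_add]
          congr 1
          ring
  refine Integrable.mono ((integrable_exp_neg_mul_sq (by norm_num : (0:ℝ) < 4⁻¹)).const_mul
    (4 * (Real.sqrt (2*Real.pi))⁻¹)) ?_ (ae_of_all _ hbound)
  exact ((measurable_id.pow_const 2).mul (measurable_gaussianPDFReal 0 1)).aestronglyMeasurable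

lemma measurable_sqsum : Measurable (fun x : Fin d → ℝ => ENNReal.ofReal (∑ i, (x i)^2)) :=
  Measurable.ennreal_ofReal (Finset.measurable_sum _ fun i _ => (measurable_pi_apply i).pow_const 2)

noncomputable def FF (i j : Fin d) : ℝ → ℝ := fun t => if j = i then t^2 * gpdf t else gpdf t

lemma moment_gamma : ∫⁻ x : Fin d → ℝ, ENNReal.ofReal (∑ i, (x i)^2)
    ∂(Measure.pi fun _ : Fin d => gaussianReal 0 1) < ⊤ := by
  rw [gamma_eq, lintegral_withDensity_eq_lintegral_mul _ measurable_gdens measurable_sqsum]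
  have hprod : ∀ (i : Fin d) (x : Fin d → ℝ), ∏ j, FF i j (x j)
      = (x i)^2 * ∏ j, gpdf (x j) := by
    intro i x
    have herase : ∀ j ∈ Finset.univ.erase i, FF i j (x j) = gpdf (x j) := by
      intro j hj
      simp only [FF, if_neg (Finset.ne_of_mem_erase hj)]
    rw [← Finset.mul_prod_erase Finset.univ (fun j => FF i j (x j)) (Finset.mem_univ i),
      Finset.prod_congr rfl herase,
      ← Finset.mul_prod_erase Finset.univ (fun j => gpdf (x j)) (Finset.mem_univ i)]
    simp only [FF, eq_self_iff_true, if_true]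
    ring
  have hptwise : ∀ x : Fin d → ℝ,
      ((fun x : Fin d → ℝ => ENNReal.ofReal (∏ i, gpdf (x i)))
        * fun x : Fin d → ℝ => ENNReal.ofReal (∑ i, (x i)^2)) x
        = ENNReal.ofReal (∑ i, ∏ j, FF i j (x j)) := by
    intro x
    simp only [Pi.mul_apply]
    rw [← ENNReal.ofReal_mul (Finset.prod_nonneg fun i _ => gpdf_nonneg _)]
    congr 1
    simp_rw [hprod, ← Finset.sum_mul]
    ring
  simp_rw [hptwise]
  have hint : Integrable (fun x : Fin d → ℝ => ∑ i, ∏ j, FF i j (x j)) := by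
    apply integrable_finset_sum
    intro i _
    have hj : ∀ j, Integrable (FF i j) := by
      intro j
      by_cases h : j = i
      · have hFFe : FF i j = fun t => t^2 * gpdf t := by funext t; simp [FF, h]
        rw [hFFe]; exact sq_gpdf_int
      · have hFFe : FF i j = gpdf := by funext t; simp [FF, h]
        rw [hFFe]; exact gpdf_int
    exact Integrable.fintype_prod hj
  exact hint.lintegral_lt_top

lemma moment_mulVec (M : Matrix (Fin d) (Fin d) ℝ) :
    ∫⁻ x : Fin d → ℝ, ENNReal.ofReal (∑ i, (M.mulVec x i)^2)
      ∂(Measure.pi fun _ : Fin d => gaussianReal 0 1) < ⊤ := by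
  set C : ℝ := ∑ i, ∑ j, (M i j)^2 with hC
  have hCnn : 0 ≤ C := Finset.sum_nonneg fun i _ => Finset.sum_nonneg fun j _ => sq_nonneg _
  have hbd : ∀ x : Fin d → ℝ, ∑ i, (M.mulVec x i)^2 ≤ C * ∑ j, (x j)^2 := by
    intro x
    rw [Finset.sum_mul]
    refine Finset.sum_le_sum fun i _ => ?_
    calc (M.mulVec x i)^2 = (∑ j, M i j * x j)^2 := by rfl
      _ ≤ (∑ j, (M i j)^2) * ∑ j, (x j)^2 :=
          Finset.sum_mul_sq_le_sq_mul_sq _ _ _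
  calc ∫⁻ x : Fin d → ℝ, ENNReal.ofReal (∑ i, (M.mulVec x i)^2)
        ∂(Measure.pi fun _ : Fin d => gaussianReal 0 1)
      ≤ ∫⁻ x : Fin d → ℝ, ENNReal.ofReal C * ENNReal.ofReal (∑ j, (x j)^2)
        ∂(Measure.pi fun _ : Fin d => gaussianReal 0 1) := by
        refine lintegral_mono fun x => ?_
        rw [← ENNReal.ofReal_mul hCnn]
        exact ENNReal.ofReal_le_ofReal (hbd x)
    _ = ENNReal.ofReal C * ∫⁻ x : Fin d → ℝ, ENNReal.ofReal (∑ j, (x j)^2)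
        ∂(Measure.pi fun _ : Fin d => gaussianReal 0 1) := lintegral_const_mul _ measurable_sqsum
    _ < ⊤ := ENNReal.mul_lt_top ENNReal.ofReal_lt_top moment_gamma

lemma measurable_dot {α : Type*} [MeasurableSpace α] {f g : α → (Fin d → ℝ)}
    (hf : Measurable f) (hg : Measurable g) : Measurable fun x => f x ⬝ᵥ g x :=
  Finset.measurable_sum _ fun i _ =>
    ((measurable_pi_apply i).comp hf).mul ((measurable_pi_apply i).comp hg)

lemma abs_quadform_le (M : Matrix (Fin d) (Fin d) ℝ) (z : Fin d → ℝ) :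
    |z ⬝ᵥ M.mulVec z| ≤ (∑ i, ∑ j, |M i j|) * (z ⬝ᵥ z) := by
  have hzz : ∀ l, (z l)^2 ≤ z ⬝ᵥ z := by
    intro l
    have : z ⬝ᵥ z = ∑ m, (z m)^2 := by simp [dotProduct, sq]
    rw [this]
    exact Finset.single_le_sum (f := fun m => (z m)^2) (fun m _ => sq_nonneg _) (Finset.mem_univ l)
  have hprod : ∀ i j, |z i| * |z j| ≤ z ⬝ᵥ z := by
    intro i j
    nlinarith [hzz i, hzz j, sq_nonneg (|z i| - |z j|), sq_abs (z i), sq_abs (z j),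
      abs_nonneg (z i), abs_nonneg (z j)]
  calc |z ⬝ᵥ M.mulVec z| = |∑ i, z i * ∑ j, M i j * z j| := rfl
    _ ≤ ∑ i, |z i * ∑ j, M i j * z j| := Finset.abs_sum_le_sum_abs _ _
    _ ≤ ∑ i, ∑ j, |M i j| * (z ⬝ᵥ z) := by
        refine Finset.sum_le_sum fun i _ => ?_
        rw [abs_mul]
        calc |z i| * |∑ j, M i j * z j| ≤ |z i| * ∑ j, |M i j * z j| :=
              mul_le_mul_of_nonneg_left (Finset.abs_sum_le_sum_abs _ _) (abs_nonneg _)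
          _ = ∑ j, |M i j| * (|z i| * |z j|) := by
              rw [Finset.mul_sum]
              exact Finset.sum_congr rfl fun j _ => by rw [abs_mul]; ring
          _ ≤ ∑ j, |M i j| * (z ⬝ᵥ z) :=
              Finset.sum_le_sum fun j _ =>
                mul_le_mul_of_nonneg_left (hprod i j) (abs_nonneg _)
    _ = (∑ i, ∑ j, |M i j|) * (z ⬝ᵥ z) := by
        rw [Finset.sum_mul]
        exact Finset.sum_congr rfl fun i _ => (Finset.sum_mul _ _ _).symm

lemma key_ident {F G : Matrix (Fin d) (Fin d) ℝ}
    (hFG : ∀ v, F.mulVec (G.mulVec v) = v) (hGF : ∀ v, G.mulVec (F.mulVec v) = v)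
    (hFsymm : ∀ v w, (F.mulVec v) ⬝ᵥ w = v ⬝ᵥ (F.mulVec w))
    (a z k : Fin d → ℝ) :
    ((a - z) - k) ⬝ᵥ ((a - z) - k)
      + ((F.mulVec a) ⬝ᵥ (F.mulVec a) + 2*(k ⬝ᵥ (F.mulVec a))
          - (F.mulVec a) ⬝ᵥ (G.mulVec (F.mulVec a)))
    = ((a - F.mulVec a) - k) ⬝ᵥ ((a - F.mulVec a) - k)
      + (z ⬝ᵥ z + 2*(k ⬝ᵥ z) - z ⬝ᵥ (G.mulVec z))
      + (a - G.mulVec z) ⬝ᵥ (F.mulVec (a - G.mulVec z)) := by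
  have h1 : G.mulVec (F.mulVec a) = a := hGF a
  have h2 : F.mulVec (G.mulVec z) = z := hFG z
  rw [h1]
  simp only [Matrix.mulVec_sub, h2, sub_dotProduct, dotProduct_sub]
  have hsym := hFsymm (G.mulVec z) a
  rw [h2] at hsym
  linarith [dotProduct_comm a z, dotProduct_comm a k,
    dotProduct_comm z k, dotProduct_comm a (F.mulVec a),
    dotProduct_comm k (F.mulVec a), dotProduct_comm z (G.mulVec z),
    dotProduct_comm (G.mulVec z) (F.mulVec a),
    dotProduct_comm a (G.mulVec z), dotProduct_comm z a, hsym]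

/-- **Optimality of the affine coupling between Gaussians.**
With `γ_d` the standard Gaussian measure on `ℝ^d`, `μ₀ = N(m₀, Σ₀)` and
`μ₁ = N(m₁, Σ₁)` defined as pushforwards of `γ_d` under `x ↦ Σᵢ^{1/2}x + mᵢ`
(the square roots being given as `R₀`, `R₁`), and `F` the (unique) symmetric
positive definite solution of `F Σ₀ F = Σ₁`, the deterministic coupling
`π_T = (id, T)_*μ₀` with `T(x) = F(x - m₀) + m₁` is a coupling of `μ₀` and `μ₁`,
and for every coupling `π` of `μ₀` and `μ₁` the quadratic transport cost of `π`
is at least that of `π_T`. -/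
theorem gaussian_optimal_transport_coupling
    {d : ℕ} (S₀ S₁ R₀ R₁ F : Matrix (Fin d) (Fin d) ℝ)
    (hS₀ : S₀.PosDef) (hS₁ : S₁.PosDef)
    (hR₀ : R₀.PosSemidef) (hR₀sq : R₀ * R₀ = S₀)
    (hR₁ : R₁.PosSemidef) (hR₁sq : R₁ * R₁ = S₁)
    (m₀ m₁ : Fin d → ℝ)
    (hF : F.PosDef) (hFeq : F * S₀ * F = S₁) :
    let γ : Measure (Fin d → ℝ) := Measure.pi fun _ => gaussianReal 0 1
    let μ₀ : Measure (Fin d → ℝ) := γ.map (fun x => R₀.mulVec x + m₀)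
    let μ₁ : Measure (Fin d → ℝ) := γ.map (fun x => R₁.mulVec x + m₁)
    let T : (Fin d → ℝ) → (Fin d → ℝ) := fun x => F.mulVec (x - m₀) + m₁
    let πT : Measure ((Fin d → ℝ) × (Fin d → ℝ)) := μ₀.map (fun x => (x, T x))
    (πT.map Prod.fst = μ₀ ∧ πT.map Prod.snd = μ₁) ∧
    ∀ π : Measure ((Fin d → ℝ) × (Fin d → ℝ)), IsProbabilityMeasure π →
      π.map Prod.fst = μ₀ → π.map Prod.snd = μ₁ →
      ∫⁻ p, ENNReal.ofReal (∑ i, (p.1 i - p.2 i) ^ 2) ∂π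
        ≥ ∫⁻ x, ENNReal.ofReal (∑ i, (x i - T x i) ^ 2) ∂μ₀ := by
  intro γ μ₀ μ₁ T πT
  -- basic measurability
  have hTmeas : Measurable T := by
    have : T = (fun y => y + m₁) ∘ (F.mulVec) ∘ (fun x => x - m₀) := by
      funext x; simp [T, Function.comp]
    rw [this]
    exact ((measurable_id.add_const m₁).comp (measurable_mulVec F)).comp
      (measurable_id.sub_const m₀)
  have hA0 : Measurable (fun x : Fin d → ℝ => R₀.mulVec x + m₀) :=
    (measurable_mulVec R₀).add_const m₀
  have hA1 : Measurable (fun x : Fin d → ℝ => R₁.mulVec x + m₁) :=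
    (measurable_mulVec R₁).add_const m₁
  have hpair : Measurable fun x : Fin d → ℝ => (x, T x) := measurable_id.prodMk hTmeas
  -- transpose facts
  have hR₀t : R₀ᵀ = R₀ := by
    have := hR₀.1; rwa [Matrix.IsHermitian, conjTranspose_eq_transpose_of_trivial] at this
  have hR₁t : R₁ᵀ = R₁ := by
    have := hR₁.1; rwa [Matrix.IsHermitian, conjTranspose_eq_transpose_of_trivial] at this
  have hFt : Fᵀ = F := by
    have := hF.1; rwa [Matrix.IsHermitian, conjTranspose_eq_transpose_of_trivial] at this
  have hR₁det : IsUnit R₁.det := by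
    have hdet : R₁.det * R₁.det = S₁.det := by rw [← Matrix.det_mul, hR₁sq]
    have : S₁.det ≠ 0 := ne_of_gt hS₁.det_pos
    apply isUnit_iff_ne_zero.mpr
    intro h; rw [h, mul_zero] at hdet; exact this hdet.symm
  -- the orthogonal matrix
  set U : Matrix (Fin d) (Fin d) ℝ := R₁⁻¹ * (F * R₀) with hUdef
  have hR₁U : R₁ * U = F * R₀ := by
    rw [hUdef, ← mul_assoc, Matrix.mul_nonsing_inv _ hR₁det, one_mul]
  have hUUt : U * Uᵀ = 1 := by
    have hkey : (F * R₀) * (F * R₀)ᵀ = R₁ * R₁ := by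
      rw [Matrix.transpose_mul, hR₀t, hFt, hR₁sq, ← hFeq, ← hR₀sq]
      simp only [mul_assoc]
    rw [hUdef, Matrix.transpose_mul, Matrix.transpose_nonsing_inv,
      hR₁t, ← mul_assoc, mul_assoc (R₁⁻¹ * (F * R₀)) _ _]
    calc R₁⁻¹ * (F * R₀) * ((F * R₀)ᵀ * R₁⁻¹)
        = R₁⁻¹ * ((F * R₀) * (F * R₀)ᵀ) * R₁⁻¹ := by simp only [mul_assoc]
      _ = R₁⁻¹ * (R₁ * R₁) * R₁⁻¹ := by rw [hkey]
      _ = (R₁⁻¹ * R₁) * (R₁ * R₁⁻¹) := by simp only [mul_assoc]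
      _ = 1 := by
          rw [Matrix.nonsing_inv_mul _ hR₁det, Matrix.mul_nonsing_inv _ hR₁det, one_mul]
  have hUtU : Uᵀ * U = 1 := mul_eq_one_comm.mp hUUt
  -- part 1b key fact
  have hμ₀T : μ₀.map T = μ₁ := by
    show (γ.map (fun x => R₀.mulVec x + m₀)).map T = γ.map (fun x => R₁.mulVec x + m₁)
    rw [Measure.map_map hTmeas hA0]
    have hcomp : (T ∘ fun x => R₀.mulVec x + m₀)
        = (fun y => R₁.mulVec y + m₁) ∘ (U.mulVec) := by
      funext x
      simp only [T, Function.comp]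
      rw [add_sub_cancel_right, Matrix.mulVec_mulVec, ← hR₁U, ← Matrix.mulVec_mulVec]
    rw [hcomp, ← Measure.map_map hA1 (measurable_mulVec U)]
    show (Measure.map (U.mulVec) (Measure.pi fun _ => gaussianReal 0 1)).map _ = _
    rw [gamma_rot hUtU]
  constructor
  · constructor
    · show (Measure.map (fun x => (x, T x)) μ₀).map Prod.fst = μ₀
      rw [Measure.map_map measurable_fst hpair]
      have hid : (Prod.fst ∘ fun x : Fin d → ℝ => (x, T x)) = id := rfl
      rw [hid]
      exact Measure.map_id
    · show (Measure.map (fun x => (x, T x)) μ₀).map Prod.snd = μ₁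
      rw [Measure.map_map measurable_snd hpair]
      exact hμ₀T
  · intro π hπ hfst hsnd
    -- inverse matrix facts
    have hFdet : IsUnit F.det := isUnit_iff_ne_zero.mpr (ne_of_gt hF.det_pos)
    set G : Matrix (Fin d) (Fin d) ℝ := F⁻¹ with hGdef
    have hFG : ∀ v, F.mulVec (G.mulVec v) = v := by
      intro v; rw [Matrix.mulVec_mulVec, Matrix.mul_nonsing_inv _ hFdet, Matrix.one_mulVec]
    have hGF : ∀ v, G.mulVec (F.mulVec v) = v := by
      intro v; rw [Matrix.mulVec_mulVec, Matrix.nonsing_inv_mul _ hFdet, Matrix.one_mulVec]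
    have hvm : ∀ v : Fin d → ℝ, Matrix.vecMul v F = F.mulVec v := by
      intro v
      have h := Matrix.vecMul_transpose (A := F) (x := v)
      rwa [hFt] at h
    have hFsymm : ∀ v w, (F.mulVec v) ⬝ᵥ w = v ⬝ᵥ (F.mulVec w) := by
      intro v w
      rw [Matrix.dotProduct_mulVec, hvm]
    have dself : ∀ v : Fin d → ℝ, v ⬝ᵥ v = ∑ i, (v i)^2 := by
      intro v; simp [dotProduct, sq]
    have dself_nn : ∀ v : Fin d → ℝ, 0 ≤ v ⬝ᵥ v := by
      intro v; rw [dself]; exact Finset.sum_nonneg fun i _ => sq_nonneg _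
    set k : Fin d → ℝ := m₁ - m₀ with hk
    set C₁ : ℝ := ∑ i, ∑ j, |G i j| with hC₁
    have hC₁nn : 0 ≤ C₁ :=
      Finset.sum_nonneg fun i _ => Finset.sum_nonneg fun j _ => abs_nonneg _
    set Kc : ℝ := k ⬝ᵥ k with hKc
    have hKnn : 0 ≤ Kc := dself_nn k
    set u : (Fin d → ℝ) → ℝ := fun y => (y - m₁) ⬝ᵥ (y - m₁) + 2*(k ⬝ᵥ (y - m₁))
      - (y - m₁) ⬝ᵥ (G.mulVec (y - m₁)) with hu
    set ub : (Fin d → ℝ) → ℝ := fun y => u y + C₁ * ((y - m₁) ⬝ᵥ (y - m₁)) + Kc with hub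
    -- quadratic form bound and cross term bound
    have hquad : ∀ z : Fin d → ℝ, |z ⬝ᵥ G.mulVec z| ≤ C₁ * (z ⬝ᵥ z) := fun z =>
      abs_quadform_le G z
    clear_value G k C₁ Kc u ub
    have hcross : ∀ z : Fin d → ℝ, |2 * (k ⬝ᵥ z)| ≤ Kc + z ⬝ᵥ z := by
      intro z
      have h1 : 0 ≤ (k + z) ⬝ᵥ (k + z) := dself_nn _
      have h2 : 0 ≤ (k - z) ⬝ᵥ (k - z) := dself_nn _
      rw [add_dotProduct, dotProduct_add, dotProduct_add] at h1
      rw [sub_dotProduct, dotProduct_sub, dotProduct_sub] at h2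
      have hcomm := dotProduct_comm k z
      rw [abs_le]
      constructor <;> [nlinarith; nlinarith]
    have hub_nonneg : ∀ y, 0 ≤ ub y := by
      intro y
      have h1 := hquad (y - m₁)
      have h2 := hcross (y - m₁)
      rw [abs_le] at h1 h2
      simp only [hub, hu]
      nlinarith [dself_nn (y - m₁)]
    have hub_upper : ∀ y, ub y ≤ (2 + 2*C₁) * ((y - m₁) ⬝ᵥ (y - m₁)) + 2*Kc := by
      intro y
      have h1 := hquad (y - m₁)
      have h2 := hcross (y - m₁)
      rw [abs_le] at h1 h2
      simp only [hub, hu]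
      nlinarith [dself_nn (y - m₁)]
    -- the pointwise real identity
    have hTx : ∀ x, T x - m₁ = F.mulVec (x - m₀) := by
      intro x; simp [T]
    have hreal : ∀ x y : Fin d → ℝ,
        (x - y) ⬝ᵥ (x - y) + (ub (T x) + C₁ * ((y - m₁) ⬝ᵥ (y - m₁)))
        = (x - T x) ⬝ᵥ (x - T x) + (ub y + C₁ * ((T x - m₁) ⬝ᵥ (T x - m₁)))
          + ((x - m₀) - G.mulVec (y - m₁)) ⬝ᵥ (F.mulVec ((x - m₀) - G.mulVec (y - m₁))) := by
      intro x y
      have hxy : x - y = ((x - m₀) - (y - m₁)) - k := by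
        simp only [hk]; abel
      have hxTx : x - T x = ((x - m₀) - F.mulVec (x - m₀)) - k := by
        simp only [T, hk]; abel
      have hkey := key_ident hFG hGF hFsymm (x - m₀) (y - m₁) k
      simp only [hub, hu, hTx, hxy, hxTx]
      linarith [hkey]
    -- probability instances
    have hμ₀prob : IsProbabilityMeasure μ₀ := by
      have hγprob : IsProbabilityMeasure (Measure.pi fun _ : Fin d => gaussianReal 0 1) :=
        inferInstance
      exact Measure.isProbabilityMeasure_map hA0.aemeasurable
    -- measurability of the various integrands
    have hmsub1 : Measurable fun y : Fin d → ℝ => y - m₁ := measurable_id.sub_const m₁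
    have hmu : Measurable u := by
      rw [hu]
      exact ((measurable_dot hmsub1 hmsub1).add
        ((measurable_dot measurable_const hmsub1).const_mul 2)).sub
        (measurable_dot hmsub1 ((measurable_mulVec G).comp hmsub1))
    have hmub : Measurable ub := by
      rw [hub]
      exact (hmu.add ((measurable_dot hmsub1 hmsub1).const_mul C₁)).add_const Kc
    have hgub : Measurable fun y : Fin d → ℝ => ENNReal.ofReal (ub y) := hmub.ennreal_ofReal
    have hgubT : Measurable fun x : Fin d → ℝ => ENNReal.ofReal (ub (T x)) :=
      (hmub.comp hTmeas).ennreal_ofReal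
    have hmsqT : Measurable fun x : Fin d → ℝ => ENNReal.ofReal ((T x - m₁) ⬝ᵥ (T x - m₁)) :=
      (measurable_dot (hTmeas.sub_const m₁) (hTmeas.sub_const m₁)).ennreal_ofReal
    have hg2 : Measurable fun y : Fin d → ℝ => ENNReal.ofReal (C₁ * ((y - m₁) ⬝ᵥ (y - m₁))) :=
      ((measurable_dot hmsub1 hmsub1).const_mul C₁).ennreal_ofReal
    have hg4 : Measurable fun x : Fin d → ℝ =>
        ENNReal.ofReal (C₁ * ((T x - m₁) ⬝ᵥ (T x - m₁))) :=
      ((measurable_dot (hTmeas.sub_const m₁) (hTmeas.sub_const m₁)).const_mul C₁).ennreal_ofReal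
    have hg5 : Measurable fun x : Fin d → ℝ =>
        ENNReal.ofReal ((x - T x) ⬝ᵥ (x - T x)) :=
      (measurable_dot (measurable_id.sub hTmeas) (measurable_id.sub hTmeas)).ennreal_ofReal
    have hgc : Measurable fun p : (Fin d → ℝ) × (Fin d → ℝ) =>
        ENNReal.ofReal ((p.1 - p.2) ⬝ᵥ (p.1 - p.2)) :=
      (measurable_dot (measurable_fst.sub measurable_snd)
        (measurable_fst.sub measurable_snd)).ennreal_ofReal
    have hmw : Measurable fun p : (Fin d → ℝ) × (Fin d → ℝ) =>
        (p.1 - m₀) - G.mulVec (p.2 - m₁) :=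
      (measurable_fst.sub_const m₀).sub ((measurable_mulVec G).comp (measurable_snd.sub_const m₁))
    have hgq : Measurable fun p : (Fin d → ℝ) × (Fin d → ℝ) =>
        ENNReal.ofReal (((p.1 - m₀) - G.mulVec (p.2 - m₁)) ⬝ᵥ
          (F.mulVec ((p.1 - m₀) - G.mulVec (p.2 - m₁)))) :=
      (measurable_dot hmw ((measurable_mulVec F).comp hmw)).ennreal_ofReal
    -- transfer lemmas for marginals
    have hπ1 : ∀ g : (Fin d → ℝ) → ENNReal, Measurable g →
        ∫⁻ p, g p.1 ∂π = ∫⁻ x, g x ∂μ₀ := by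
      intro g hg
      rw [← hfst, lintegral_map hg measurable_fst]
    have hπ2 : ∀ g : (Fin d → ℝ) → ENNReal, Measurable g →
        ∫⁻ p, g p.2 ∂π = ∫⁻ y, g y ∂μ₁ := by
      intro g hg
      rw [← hsnd, lintegral_map hg measurable_snd]
    have hμT : ∀ g : (Fin d → ℝ) → ENNReal, Measurable g →
        ∫⁻ y, g y ∂μ₁ = ∫⁻ x, g (T x) ∂μ₀ := by
      intro g hg
      rw [← hμ₀T, lintegral_map hg hTmeas]
    -- abbreviations
    set X := ∫⁻ p, ENNReal.ofReal ((p.1 - p.2) ⬝ᵥ (p.1 - p.2)) ∂π with hX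
    set IT := ∫⁻ x, ENNReal.ofReal ((x - T x) ⬝ᵥ (x - T x)) ∂μ₀ with hIT
    set A := ∫⁻ x, ENNReal.ofReal (ub (T x)) ∂μ₀ with hA
    set B := ∫⁻ x, ENNReal.ofReal (C₁ * ((T x - m₁) ⬝ᵥ (T x - m₁))) ∂μ₀ with hB
    set Q := ∫⁻ p, ENNReal.ofReal (((p.1 - m₀) - G.mulVec (p.2 - m₁)) ⬝ᵥ
      (F.mulVec ((p.1 - m₀) - G.mulVec (p.2 - m₁)))) ∂π with hQ
    -- marginal computations
    have hI1 : ∫⁻ p, ENNReal.ofReal (ub (T p.1)) ∂π = A :=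
      hπ1 (fun x => ENNReal.ofReal (ub (T x))) hgubT
    have hI2 : ∫⁻ p, ENNReal.ofReal (C₁ * ((p.2 - m₁) ⬝ᵥ (p.2 - m₁))) ∂π = B := by
      rw [hπ2 (fun y => ENNReal.ofReal (C₁ * ((y - m₁) ⬝ᵥ (y - m₁)))) hg2,
        hμT (fun y => ENNReal.ofReal (C₁ * ((y - m₁) ⬝ᵥ (y - m₁)))) hg2]
    have hI3 : ∫⁻ p, ENNReal.ofReal (ub p.2) ∂π = A := by
      rw [hπ2 (fun y => ENNReal.ofReal (ub y)) hgub, hμT (fun y => ENNReal.ofReal (ub y)) hgub]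
    have hI4 : ∫⁻ p, ENNReal.ofReal (C₁ * ((T p.1 - m₁) ⬝ᵥ (T p.1 - m₁))) ∂π = B :=
      hπ1 (fun x => ENNReal.ofReal (C₁ * ((T x - m₁) ⬝ᵥ (T x - m₁)))) hg4
    have hI5 : ∫⁻ p, ENNReal.ofReal ((p.1 - T p.1) ⬝ᵥ (p.1 - T p.1)) ∂π = IT :=
      hπ1 (fun x => ENNReal.ofReal ((x - T x) ⬝ᵥ (x - T x))) hg5
    -- finiteness
    have hB' : (∫⁻ x, ENNReal.ofReal ((T x - m₁) ⬝ᵥ (T x - m₁)) ∂μ₀) < ⊤ := by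
      have hμdef : μ₀ = Measure.map (fun x => R₀.mulVec x + m₀)
        (Measure.pi fun _ : Fin d => gaussianReal 0 1) := rfl
      rw [hμdef, lintegral_map hmsqT hA0]
      have he : ∀ x : Fin d → ℝ, T (R₀.mulVec x + m₀) - m₁ = (F * R₀).mulVec x := by
        intro x
        rw [hTx, add_sub_cancel_right, Matrix.mulVec_mulVec]
      simp_rw [he, dself]
      exact moment_mulVec (F * R₀)
    have hAfin : A < ⊤ := by
      have hstep : A ≤ ENNReal.ofReal (2 + 2*C₁)
          * (∫⁻ x, ENNReal.ofReal ((T x - m₁) ⬝ᵥ (T x - m₁)) ∂μ₀) + ENNReal.ofReal (2*Kc) := by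
        rw [hA]
        calc ∫⁻ x, ENNReal.ofReal (ub (T x)) ∂μ₀
            ≤ ∫⁻ x, (ENNReal.ofReal (2 + 2*C₁)
                * ENNReal.ofReal ((T x - m₁) ⬝ᵥ (T x - m₁)) + ENNReal.ofReal (2*Kc)) ∂μ₀ := by
              refine lintegral_mono fun x => ?_
              calc ENNReal.ofReal (ub (T x))
                  ≤ ENNReal.ofReal ((2 + 2*C₁) * ((T x - m₁) ⬝ᵥ (T x - m₁)) + 2*Kc) :=
                    ENNReal.ofReal_le_ofReal (hub_upper (T x))
                _ = ENNReal.ofReal (2 + 2*C₁) * ENNReal.ofReal ((T x - m₁) ⬝ᵥ (T x - m₁))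
                    + ENNReal.ofReal (2*Kc) := by
                    rw [ENNReal.ofReal_add (mul_nonneg (by linarith) (dself_nn _))
                      (by linarith), ENNReal.ofReal_mul (by linarith)]
          _ = ENNReal.ofReal (2 + 2*C₁)
              * (∫⁻ x, ENNReal.ofReal ((T x - m₁) ⬝ᵥ (T x - m₁)) ∂μ₀) + ENNReal.ofReal (2*Kc) := by
              rw [lintegral_add_right _ measurable_const, lintegral_const_mul _ hmsqT,
                lintegral_const, measure_univ, mul_one]
      refine lt_of_le_of_lt hstep ?_
      exact ENNReal.add_lt_top.mpr ⟨ENNReal.mul_lt_top ENNReal.ofReal_lt_top hB',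
        ENNReal.ofReal_lt_top⟩
    have hBfin : B < ⊤ := by
      have : B = ENNReal.ofReal C₁
          * ∫⁻ x, ENNReal.ofReal ((T x - m₁) ⬝ᵥ (T x - m₁)) ∂μ₀ := by
        rw [hB]
        simp_rw [ENNReal.ofReal_mul hC₁nn]
        rw [lintegral_const_mul _ hmsqT]
      rw [this]
      exact ENNReal.mul_lt_top ENNReal.ofReal_lt_top hB'
    -- nonnegativity of the quadratic remainder
    have hqnn : ∀ v : Fin d → ℝ, 0 ≤ v ⬝ᵥ F.mulVec v := by
      intro v
      simpa using hF.posSemidef.dotProduct_mulVec_nonneg v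
    have hgubT' : Measurable fun p : (Fin d → ℝ) × (Fin d → ℝ) =>
        ENNReal.ofReal (ub (T p.1)) := hgubT.comp measurable_fst
    have hgub' : Measurable fun p : (Fin d → ℝ) × (Fin d → ℝ) =>
        ENNReal.ofReal (ub p.2) := hgub.comp measurable_snd
    have hg4' : Measurable fun p : (Fin d → ℝ) × (Fin d → ℝ) =>
        ENNReal.ofReal (C₁ * ((T p.1 - m₁) ⬝ᵥ (T p.1 - m₁))) := hg4.comp measurable_fst
    have hg5' : Measurable fun p : (Fin d → ℝ) × (Fin d → ℝ) =>
        ENNReal.ofReal ((p.1 - T p.1) ⬝ᵥ (p.1 - T p.1)) := hg5.comp measurable_fst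
    -- the big identity of integrals
    have hkey : X + (A + B) = IT + (A + B) + Q := by
      have hLHS : ∫⁻ p, (ENNReal.ofReal ((p.1 - p.2) ⬝ᵥ (p.1 - p.2))
          + (ENNReal.ofReal (ub (T p.1))
            + ENNReal.ofReal (C₁ * ((p.2 - m₁) ⬝ᵥ (p.2 - m₁))))) ∂π = X + (A + B) := by
        rw [lintegral_add_left hgc, lintegral_add_left hgubT', hI1, hI2]
      have hRHS : ∫⁻ p, ((ENNReal.ofReal ((p.1 - T p.1) ⬝ᵥ (p.1 - T p.1))
          + (ENNReal.ofReal (ub p.2)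
            + ENNReal.ofReal (C₁ * ((T p.1 - m₁) ⬝ᵥ (T p.1 - m₁)))))
          + ENNReal.ofReal (((p.1 - m₀) - G.mulVec (p.2 - m₁)) ⬝ᵥ
              (F.mulVec ((p.1 - m₀) - G.mulVec (p.2 - m₁))))) ∂π = IT + (A + B) + Q := by
        rw [lintegral_add_left (show Measurable fun p : (Fin d → ℝ) × (Fin d → ℝ) =>
            ENNReal.ofReal ((p.1 - T p.1) ⬝ᵥ (p.1 - T p.1)) + (ENNReal.ofReal (ub p.2)
              + ENNReal.ofReal (C₁ * ((T p.1 - m₁) ⬝ᵥ (T p.1 - m₁)))) from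
            hg5'.add (hgub'.add hg4')),
          lintegral_add_left hg5', lintegral_add_left hgub', hI3, hI4, hI5]
      rw [← hLHS, ← hRHS]
      refine lintegral_congr fun p => ?_
      have h1 : (0:ℝ) ≤ (p.1 - p.2) ⬝ᵥ (p.1 - p.2) := dself_nn _
      have h2 : (0:ℝ) ≤ ub (T p.1) := hub_nonneg _
      have h3 : (0:ℝ) ≤ C₁ * ((p.2 - m₁) ⬝ᵥ (p.2 - m₁)) := mul_nonneg hC₁nn (dself_nn _)
      have h4 : (0:ℝ) ≤ (p.1 - T p.1) ⬝ᵥ (p.1 - T p.1) := dself_nn _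
      have h5 : (0:ℝ) ≤ ub p.2 := hub_nonneg _
      have h6 : (0:ℝ) ≤ C₁ * ((T p.1 - m₁) ⬝ᵥ (T p.1 - m₁)) := mul_nonneg hC₁nn (dself_nn _)
      have h7 : (0:ℝ) ≤ ((p.1 - m₀) - G.mulVec (p.2 - m₁)) ⬝ᵥ
          (F.mulVec ((p.1 - m₀) - G.mulVec (p.2 - m₁))) := hqnn _
      rw [← ENNReal.ofReal_add h2 h3, ← ENNReal.ofReal_add h1 (add_nonneg h2 h3),
        ← ENNReal.ofReal_add h5 h6, ← ENNReal.ofReal_add h4 (add_nonneg h5 h6),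
        ← ENNReal.ofReal_add (add_nonneg h4 (add_nonneg h5 h6)) h7]
      exact congrArg ENNReal.ofReal (hreal p.1 p.2)
    -- conclude
    have hABfin : A + B ≠ ⊤ := (ENNReal.add_lt_top.mpr ⟨hAfin, hBfin⟩).ne
    have hfinal : IT ≤ X := by
      have h1 : IT + (A + B) ≤ X + (A + B) := by
        calc IT + (A + B) ≤ IT + (A + B) + Q := le_self_add
          _ = X + (A + B) := hkey.symm
      exact (ENNReal.add_le_add_iff_right hABfin).mp h1
    -- rewrite the goal in dot-product form
    have hgoalL : ∫⁻ p, ENNReal.ofReal (∑ i, (p.1 i - p.2 i) ^ 2) ∂π = X := by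
      refine lintegral_congr fun p => ?_
      exact congrArg ENNReal.ofReal (dself (p.1 - p.2)).symm
    have hgoalR : ∫⁻ x, ENNReal.ofReal (∑ i, (x i - T x i) ^ 2) ∂μ₀ = IT := by
      refine lintegral_congr fun x => ?_
      exact congrArg ENNReal.ofReal (dself (x - T x)).symm
    rw [ge_iff_le, hgoalL, hgoalR]
    exact hfinal
end

section
/- Let Σ be a symmetric positive definite d×d real matrix, m ∈ ℝ^d, and let ρ(x) = exp(−½ (x − m)ᵀ Σ⁻¹ (x − m)) be the (unnormalized) Gaussian density. Let v ∈ ℝ^d and take the linear observation function h(x) = ⟨v, x⟩, with ρ-mean ĥ = ⟨v, m⟩. Then φ(x) = ⟨Σ v, x − m⟩ solves the weighted Poisson equation: −∇·(ρ(x) ∇φ(x)) = (h(x) − ĥ) ρ(x) for all x ∈ ℝ^d. In particular, the gain function ∇φ(x) = Σv is constant in x and equals the Kalman gain. -/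
open Matrix MeasureTheory

/-- The gradient of a scalar function on `ℝ^d`. -/
noncomputable def grad {d : ℕ} (f : (Fin d → ℝ) → ℝ) (x : Fin d → ℝ) : Fin d → ℝ :=
  fun i => fderiv ℝ f x (Pi.single i 1)

/-- The divergence of a vector field on `ℝ^d`. -/
noncomputable def div {d : ℕ} (v : (Fin d → ℝ) → Fin d → ℝ) (x : Fin d → ℝ) : ℝ :=
  ∑ i, fderiv ℝ v x (Pi.single i 1) i

/-- Derivative of a shifted linear functional `y ↦ w ⬝ᵥ (y - m)`. -/
lemma hasFDerivAt_dot_sub {d : ℕ} (w m x : Fin d → ℝ) :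
    HasFDerivAt (fun y : Fin d → ℝ => w ⬝ᵥ (y - m))
      (∑ j, w j • (ContinuousLinearMap.proj j : (Fin d → ℝ) →L[ℝ] ℝ)) x := by
  have key : ∀ j : Fin d, HasFDerivAt (fun y : Fin d → ℝ => w j * (y j - m j))
      (w j • (ContinuousLinearMap.proj j : (Fin d → ℝ) →L[ℝ] ℝ)) x := by
    intro j
    exact (((ContinuousLinearMap.proj j : (Fin d → ℝ) →L[ℝ] ℝ).hasFDerivAt (x := x)).sub_const
      (m j)).const_mul (w j)
  have hs := HasFDerivAt.fun_sum (fun j (_ : j ∈ Finset.univ) => key j)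
  simpa [dotProduct] using hs

/-- Derivative of the quadratic form `y ↦ (y-m) ⬝ᵥ A *ᵥ (y-m)`. -/
lemma hasFDerivAt_quad {d : ℕ} (A : Matrix (Fin d) (Fin d) ℝ) (m x : Fin d → ℝ) :
    HasFDerivAt (fun y : Fin d → ℝ => (y - m) ⬝ᵥ A *ᵥ (y - m))
      (∑ i, ((x i - m i) • (∑ j, A i j • (ContinuousLinearMap.proj j : (Fin d → ℝ) →L[ℝ] ℝ))
        + (A i ⬝ᵥ (x - m)) • (ContinuousLinearMap.proj i : (Fin d → ℝ) →L[ℝ] ℝ))) x := by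
  have hterm : ∀ i : Fin d, HasFDerivAt (fun y : Fin d → ℝ => (y i - m i) * (A i ⬝ᵥ (y - m)))
      ((x i - m i) • (∑ j, A i j • (ContinuousLinearMap.proj j : (Fin d → ℝ) →L[ℝ] ℝ))
        + (A i ⬝ᵥ (x - m)) • (ContinuousLinearMap.proj i : (Fin d → ℝ) →L[ℝ] ℝ)) x := by
    intro i
    have hc : HasFDerivAt (fun y : Fin d → ℝ => y i - m i)
        (ContinuousLinearMap.proj i : (Fin d → ℝ) →L[ℝ] ℝ) x :=
      ((ContinuousLinearMap.proj i : (Fin d → ℝ) →L[ℝ] ℝ).hasFDerivAt (x := x)).sub_const (m i)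
    exact hc.mul (hasFDerivAt_dot_sub (A i) m x)
  have hs := HasFDerivAt.fun_sum (fun i (_ : i ∈ Finset.univ) => hterm i)
  simpa [dotProduct, mulVec] using hs

/-- **Exact gain in the linear Gaussian case.** For the (unnormalized) Gaussian density
`ρ(x) = exp(-½(x-m)ᵀΣ⁻¹(x-m))` with `Σ` symmetric positive definite, the linear
observation `h(x) = ⟨v, x⟩` with `ρ`-mean `ĥ = ⟨v, m⟩`, the function
`φ(x) = ⟨Σv, x - m⟩` solves the weighted Poisson equation
`-∇·(ρ∇φ) = (h - ĥ)ρ`, and the gain `∇φ ≡ Σv` is the (constant) Kalman gain. -/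
theorem gaussian_poisson_equation_kalman_gain
    {d : ℕ} (S : Matrix (Fin d) (Fin d) ℝ) (hS : S.PosDef)
    (m v : Fin d → ℝ) :
    let ρ : (Fin d → ℝ) → ℝ :=
      fun x => Real.exp (-(1/2) * ((x - m) ⬝ᵥ S⁻¹.mulVec (x - m)))
    let h : (Fin d → ℝ) → ℝ := fun x => v ⬝ᵥ x
    let φ : (Fin d → ℝ) → ℝ := fun x => S.mulVec v ⬝ᵥ (x - m)
    (∀ x, -div (fun y => ρ y • grad φ y) x = (h x - v ⬝ᵥ m) * ρ x) ∧
    (∀ x, grad φ x = S.mulVec v) := by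
  intro ρ h φ
  set A := S⁻¹ with hA
  have hAsymm : ∀ i j, A i j = A j i := by
    intro i j
    simpa using hS.1.inv.apply j i
  have hdet : IsUnit S.det := isUnit_iff_ne_zero.2 (ne_of_gt hS.det_pos)
  have hSA : S * A = 1 := Matrix.mul_nonsing_inv S hdet
  have hSsymm : Sᵀ = S := by
    have := hS.1
    simpa [Matrix.IsHermitian, Matrix.conjTranspose_eq_transpose_of_trivial] using this
  -- the gradient of φ is constant
  have hgrad : ∀ x, grad φ x = S.mulVec v := by
    intro x
    funext i
    have hφ := hasFDerivAt_dot_sub (S.mulVec v) m x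
    show (fderiv ℝ φ x) (Pi.single i 1) = S.mulVec v i
    rw [hφ.fderiv]
    simp [Pi.single_apply]
  refine ⟨?_, hgrad⟩
  intro x
  have hfield : (fun y => ρ y • grad φ y) = fun y => ρ y • S.mulVec v := by
    funext y
    rw [hgrad y]
  rw [hfield]
  -- derivative of ρ
  set D : (Fin d → ℝ) →L[ℝ] ℝ :=
    ∑ i, ((x i - m i) • (∑ j, A i j • (ContinuousLinearMap.proj j : (Fin d → ℝ) →L[ℝ] ℝ))
      + (A i ⬝ᵥ (x - m)) • (ContinuousLinearMap.proj i : (Fin d → ℝ) →L[ℝ] ℝ)) with hD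
  have hq := hasFDerivAt_quad A m x
  have hρ : HasFDerivAt ρ (Real.exp (-(1/2) * ((x - m) ⬝ᵥ A *ᵥ (x - m))) • ((-(1/2) : ℝ) • D)) x :=
    (hq.const_mul (-(1/2))).exp
  have hF : HasFDerivAt (fun y => ρ y • S.mulVec v)
      ((Real.exp (-(1/2) * ((x - m) ⬝ᵥ A *ᵥ (x - m))) • ((-(1/2) : ℝ) • D)).smulRight
        (S.mulVec v)) x :=
    hρ.smul_const (S.mulVec v)
  -- evaluate D on basis vectors
  have hDi : ∀ i, D (Pi.single i 1) = 2 * (A *ᵥ (x - m)) i := by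
    intro i
    rw [hD]
    simp only [ContinuousLinearMap.sum_apply, ContinuousLinearMap.add_apply,
      ContinuousLinearMap.smul_apply, ContinuousLinearMap.proj_apply, Pi.single_apply,
      smul_eq_mul, mul_ite, mul_one, mul_zero]
    rw [Finset.sum_add_distrib]
    have h1 : ∑ k, (x k - m k) * (∑ j, if j = i then A k j else 0) = (A *ᵥ (x - m)) i := by
      simp only [Finset.sum_ite_eq', Finset.mem_univ, if_true]
      rw [mulVec]
      simp only [dotProduct, Pi.sub_apply]
      exact Finset.sum_congr rfl fun k _ => by rw [hAsymm i k]; ring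
    have h2 : ∑ k, (if k = i then A k ⬝ᵥ (x - m) else 0) = (A *ᵥ (x - m)) i := by
      simp only [Finset.sum_ite_eq', Finset.mem_univ, if_true]
      rfl
    rw [h1, h2]; ring
  -- compute the divergence
  rw [div, hF.fderiv]
  have hkey : (A *ᵥ (x - m)) ⬝ᵥ (S *ᵥ v) = (x - m) ⬝ᵥ v := by
    rw [dotProduct_mulVec, ← hSsymm, vecMul_transpose, mulVec_mulVec, hSA, one_mulVec]
  have hterm : ∀ i : Fin d,
      ((Real.exp (-(1/2) * ((x - m) ⬝ᵥ A *ᵥ (x - m))) • ((-(1/2) : ℝ) • D)).smulRight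
        (S.mulVec v)) (Pi.single i 1) i
      = -(Real.exp (-(1/2) * ((x - m) ⬝ᵥ A *ᵥ (x - m)))
          * ((A *ᵥ (x - m)) i * (S *ᵥ v) i)) := by
    intro i
    simp only [ContinuousLinearMap.smulRight_apply, ContinuousLinearMap.smul_apply,
      Pi.smul_apply, smul_eq_mul, hDi i]
    ring
  rw [Finset.sum_congr rfl fun i _ => hterm i]
  rw [Finset.sum_neg_distrib, neg_neg, ← Finset.mul_sum]
  have hkey' : ∑ i, (A *ᵥ (x - m)) i * (S *ᵥ v) i = (x - m) ⬝ᵥ v := by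
    rw [← hkey]; rfl
  rw [hkey']
  have hxv : (x - m) ⬝ᵥ v = v ⬝ᵥ x - v ⬝ᵥ m := by
    rw [sub_dotProduct, dotProduct_comm x v, dotProduct_comm m v]
  show Real.exp (-(1/2) * ((x - m) ⬝ᵥ A *ᵥ (x - m))) * ((x - m) ⬝ᵥ v)
      = (v ⬝ᵥ x - v ⬝ᵥ m) * Real.exp (-(1/2) * ((x - m) ⬝ᵥ A *ᵥ (x - m)))
  rw [hxv]
  ring
end
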